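/- Let m, n be positive integers with p = gcd(m,n). Define G̃(m,n) = (1/π) ∫_{-π/2}^{π/2} ∏_{i=0}^{n−1} sin(x + m·i·π/n)^2 dx. Then G̃(m,n) = 2^p · (2p−1)!! / (4^n · p!). -/

import Mathlib

open Real Finset MeasureTheory


lemma aux_prod_one_sub {q : ℕ} (hq : 0 < q) {ζ : ℂ} (hζ : IsPrimitiveRoot ζ q) (y : ℂ) :
    ∏ j ∈ Finset.range q, (1 - ζ ^ j * y) = 1 - y ^ q := by
  haveI : NeZero q := ⟨hq.ne'⟩
  have h := hζ.pow_sub_pow_eq_prod_sub_mul 1 y hq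
  simp only [one_pow] at h
  rw [h]
  refine Finset.prod_nbij (fun j => ζ ^ j) ?_ ?_ ?_ ?_
  · intro a _
    rw [Polynomial.mem_nthRootsFinset hq, ← pow_mul, mul_comm, pow_mul, hζ.pow_eq_one, one_pow]
  · intro a ha b hb hab
    exact hζ.pow_inj (Finset.mem_range.1 (Finset.mem_coe.1 ha)) (Finset.mem_range.1 (Finset.mem_coe.1 hb)) hab
  · intro μ hμ
    obtain ⟨i, hi, he⟩ := hζ.eq_pow_of_pow_eq_one ((Polynomial.mem_nthRootsFinset hq _).1 hμ)
    exact ⟨i, Finset.mem_coe.2 (Finset.mem_range.2 hi), he⟩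
  · intro a _; rfl

lemma aux_two_sin (z : ℂ) :
    2 * Complex.sin z = Complex.I * (Complex.exp (-(z * Complex.I)) * (1 - Complex.exp (z * Complex.I) ^ 2)) := by
  rw [show Complex.sin z = (Complex.exp (-z * Complex.I) - Complex.exp (z * Complex.I)) * Complex.I / 2 from rfl]
  have h : Complex.exp (-(z * Complex.I)) * Complex.exp (z * Complex.I) ^ 2 = Complex.exp (z * Complex.I) := by
    rw [sq, ← Complex.exp_add, ← Complex.exp_add]; ring_nf
  have h2 : (-z) * Complex.I = -(z * Complex.I) := by ring
  rw [h2]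
  linear_combination Complex.I * h

lemma aux_prod_two_sin (q : ℕ) (hq : 0 < q) (x : ℝ) :
    ∏ j ∈ Finset.range q, (2 * Complex.sin ((x : ℂ) + j * π / q)) = 2 * Complex.sin (q * x) := by
  have hq0 : (q : ℂ) ≠ 0 := Nat.cast_ne_zero.2 hq.ne'
  simp only [aux_two_sin]
  rw [Finset.prod_mul_distrib, Finset.prod_mul_distrib, Finset.prod_const, Finset.card_range]
  have hsumn : (∑ j ∈ Finset.range q, (j : ℂ)) * 2 = q * (q - 1) := by
    have := Finset.sum_range_id_mul_two q
    have h2 : (((∑ j ∈ Finset.range q, j) * 2 : ℕ) : ℂ) = ((q * (q-1) : ℕ) : ℂ) := by rw [this]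
    push_cast [Nat.cast_sub hq] at h2
    convert h2 using 2 <;> push_cast <;> ring
  have hmI : Complex.exp (-(↑π/2) * Complex.I) = -Complex.I := by
    rw [Complex.exp_mul_I, Complex.cos_neg, Complex.sin_neg,
      show ((π:ℂ)/2) = ((π/2 : ℝ) : ℂ) by push_cast; ring,
      ← Complex.ofReal_cos, ← Complex.ofReal_sin]
    simp [Real.cos_pi_div_two, Real.sin_pi_div_two]
  have hA : ∏ j ∈ Finset.range q, Complex.exp (-(((x:ℂ) + j * π / q) * Complex.I))
      = Complex.exp (-((q : ℂ) * x * Complex.I)) * (-Complex.I) ^ (q - 1) := by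
    rw [← Complex.exp_sum]
    have hs : ∑ j ∈ Finset.range q, (-(((x:ℂ) + j * π / q) * Complex.I))
        = -((q : ℂ) * x * Complex.I) + ((q - 1 : ℕ) : ℂ) * (-(π / 2) * Complex.I) := by
      have hc : ∀ j ∈ Finset.range q, (-(((x:ℂ) + j * π / q) * Complex.I))
          = -((x:ℂ) * Complex.I) + (j:ℂ) * (-(↑π / ↑q * Complex.I)) := by
        intro j _; ring
      rw [Finset.sum_congr rfl hc, Finset.sum_add_distrib, Finset.sum_const, Finset.card_range,
        ← Finset.sum_mul]
      push_cast [Nat.cast_sub hq]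
      field_simp
      linear_combination (-(↑π * Complex.I)) * hsumn
    rw [hs, Complex.exp_add]
    congr 1
    rw [Complex.exp_nat_mul, hmI]
  rw [hA]
  have hζ : IsPrimitiveRoot (Complex.exp (2 * ↑π * Complex.I / q)) q :=
    Complex.isPrimitiveRoot_exp q hq.ne'
  have hxq : Complex.exp ((x:ℂ) * Complex.I) ^ q = Complex.exp ((q:ℂ) * x * Complex.I) := by
    rw [← Complex.exp_nat_mul]; congr 1; ring
  have hB : ∏ j ∈ Finset.range q, (1 - Complex.exp (((x:ℂ) + j * π / q) * Complex.I) ^ 2)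
      = 1 - Complex.exp ((q : ℂ) * x * Complex.I) ^ 2 := by
    have hterm : ∀ j ∈ Finset.range q, (1 - Complex.exp (((x:ℂ) + j * π / q) * Complex.I) ^ 2)
        = 1 - (Complex.exp (2 * ↑π * Complex.I / q)) ^ j * Complex.exp ((x:ℂ) * Complex.I) ^ 2 := by
      intro j _
      congr 1
      rw [sq, ← Complex.exp_add, ← Complex.exp_nat_mul, sq, ← Complex.exp_add, ← Complex.exp_add]
      congr 1
      field_simp
      ring
    rw [Finset.prod_congr rfl hterm, aux_prod_one_sub hq hζ]
    congr 1
    rw [← pow_mul, mul_comm 2 q, pow_mul, hxq]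
  rw [hB]
  have hI : Complex.I ^ q * (-Complex.I) ^ (q - 1) = Complex.I := by
    obtain ⟨r, rfl⟩ : ∃ r, q = r + 1 := ⟨q - 1, (Nat.succ_pred_eq_of_pos hq).symm⟩
    simp only [Nat.add_sub_cancel, pow_succ']
    rw [mul_assoc, ← mul_pow]
    simp [Complex.I_mul_I]
  linear_combination (Complex.exp (-(↑q * ↑x * Complex.I)) * (1 - Complex.exp (↑q * ↑x * Complex.I) ^ 2)) * hI

lemma aux_prod_sin_sq (q : ℕ) (hq : 0 < q) (x : ℝ) :
    ∏ j ∈ Finset.range q, Real.sin (x + j * π / q) ^ 2 = Real.sin (q * x) ^ 2 / 4 ^ (q - 1) := by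
  have hR : ∏ j ∈ Finset.range q, (2 * Real.sin (x + j * π / q)) = 2 * Real.sin (q * x) := by
    have h := aux_prod_two_sin q hq x
    have hc : ((∏ j ∈ Finset.range q, (2 * Real.sin (x + j * π / q)) : ℝ) : ℂ)
        = ((2 * Real.sin (q * x) : ℝ) : ℂ) := by
      push_cast
      exact h
    exact_mod_cast hc
  have hsq := congrArg (· ^ 2) hR
  rw [← Finset.prod_pow] at hsq
  simp only [mul_pow] at hsq
  rw [Finset.prod_mul_distrib, Finset.prod_const, Finset.card_range] at hsq
  have h4 : (0:ℝ) < 4 ^ (q-1) := by positivity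
  rw [eq_div_iff h4.ne']
  obtain ⟨r, rfl⟩ : ∃ r, q = r + 1 := ⟨q - 1, (Nat.succ_pred_eq_of_pos hq).symm⟩
  simp only [Nat.add_sub_cancel] at *
  linear_combination hsq / 4

lemma aux_sin_sq_add_nat_pi (t : ℝ) (k : ℕ) : Real.sin (t + k * π) ^ 2 = Real.sin t ^ 2 := by
  induction k with
  | zero => simp
  | succ k ih =>
    have h : t + ((k:ℕ)+1) * π = (t + k * π) + π := by push_cast; ring
    push_cast
    rw [h, Real.sin_antiperiodic (t + k * π), neg_sq]
    exact_mod_cast ih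

lemma aux_prod_pow (F : ℕ → ℝ) (q : ℕ) (hF : ∀ i, F (i + q) = F i) (p : ℕ) :
    ∏ i ∈ Finset.range (p * q), F i = (∏ i ∈ Finset.range q, F i) ^ p := by
  induction p with
  | zero => simp
  | succ p ih =>
    have hshift : ∀ t i, F (t * q + i) = F i := by
      intro t
      induction t with
      | zero => simp
      | succ t iht =>
        intro i
        have : (t+1) * q + i = (t * q + i) + q := by ring
        rw [this, hF, iht]
    rw [show (p+1) * q = p * q + q by ring, Finset.prod_range_add, ih, pow_succ]
    congr 1
    exact Finset.prod_congr rfl fun i _ => hshift p i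

lemma aux_prod_mod (g : ℕ → ℝ) (q m' : ℕ) (hq : 0 < q) (hco : Nat.Coprime m' q) :
    ∏ i ∈ Finset.range q, g ((m' * i) % q) = ∏ j ∈ Finset.range q, g j := by
  rcases eq_or_lt_of_le (show 1 ≤ q from hq) with h1 | h1
  · rw [← h1]
    simp
  · obtain ⟨k, -, hk⟩ := Nat.exists_mul_mod_eq_one_of_coprime hco h1
    have hk' : m' * k ≡ 1 [MOD q] := by
      unfold Nat.ModEq
      rw [hk, Nat.one_mod_eq_one.2 h1.ne']
    refine Finset.prod_nbij' (fun i => (m' * i) % q) (fun j => (k * j) % q) ?_ ?_ ?_ ?_ ?_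
    · intro a _; exact Finset.mem_range.2 (Nat.mod_lt _ hq)
    · intro a _; exact Finset.mem_range.2 (Nat.mod_lt _ hq)
    · intro a ha
      have h2 : k * ((m' * a) % q) ≡ a [MOD q] := by
        calc k * ((m' * a) % q) ≡ k * (m' * a) [MOD q] := ((Nat.mod_modEq (m' * a) q)).mul_left k
          _ = (m' * k) * a := by ring
          _ ≡ 1 * a [MOD q] := hk'.mul_right a
          _ = a := by ring
      rw [Nat.ModEq] at h2
      show k * (m' * a % q) % q = a
      rw [h2, Nat.mod_eq_of_lt (Finset.mem_range.1 ha)]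
    · intro a ha
      have h2 : m' * ((k * a) % q) ≡ a [MOD q] := by
        calc m' * ((k * a) % q) ≡ m' * (k * a) [MOD q] := ((Nat.mod_modEq (k * a) q)).mul_left m'
          _ = (m' * k) * a := by ring
          _ ≡ 1 * a [MOD q] := hk'.mul_right a
          _ = a := by ring
      rw [Nat.ModEq] at h2
      show m' * (k * a % q) % q = a
      rw [h2, Nat.mod_eq_of_lt (Finset.mem_range.1 ha)]
    · intro a _; rfl


lemma aux_integral (q p : ℕ) (hq : 0 < q) :
    ∫ x in (-(π/2))..(π/2), Real.sin ((q:ℝ) * x) ^ (2*p)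
      = π * ∏ i ∈ Finset.range p, (2 * (i:ℝ) + 1) / (2 * i + 2) := by
  have hq0 : (q:ℝ) ≠ 0 := Nat.cast_ne_zero.2 hq.ne'
  have hP : Function.Periodic (fun y => Real.sin y ^ (2*p)) π := by
    intro y
    simp only [Real.sin_antiperiodic y, Even.neg_pow (even_two_mul p)]
  have hInt : ∀ t₁ t₂ : ℝ, IntervalIntegrable (fun y => Real.sin y ^ (2*p)) volume t₁ t₂ :=
    fun t₁ t₂ => (Real.continuous_sin.pow _).intervalIntegrable t₁ t₂
  rw [intervalIntegral.integral_comp_mul_left (fun y => Real.sin y ^ (2*p)) hq0]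
  rw [show (q:ℝ) * (π/2) = (q:ℝ) * (-(π/2)) + (q:ℤ) • π by push_cast [zsmul_eq_mul]; ring]
  rw [hP.intervalIntegral_add_zsmul_eq (q:ℤ) _ hInt]
  rw [hP.intervalIntegral_add_eq _ 0, zero_add, integral_sin_pow_even]
  rw [zsmul_eq_mul, smul_eq_mul]
  push_cast
  field_simp

lemma aux_df (p : ℕ) : ∏ i ∈ Finset.range p, ((2 * (i:ℝ) + 1) / (2 * i + 2))
    = (Nat.doubleFactorial (2*p - 1) : ℝ) / (2^p * p.factorial) := by
  induction p with
  | zero => simp [Nat.doubleFactorial]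
  | succ p ih =>
    have hdf : Nat.doubleFactorial (2*(p+1) - 1) = (2*p+1) * Nat.doubleFactorial (2*p - 1) := by
      cases p with
      | zero => rfl
      | succ t =>
        rw [show 2*(t+1+1) - 1 = (2*(t+1) - 1) + 2 from by omega, Nat.doubleFactorial_add_two]
        congr 1
    rw [Finset.prod_range_succ, ih, hdf]
    have h1 : (p.factorial : ℝ) ≠ 0 := Nat.cast_ne_zero.2 p.factorial_ne_zero
    push_cast [Nat.factorial_succ]
    field_simp
    ring


theorem stmt_9 (m n : ℕ) (hm : 0 < m) (hn : 0 < n) :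
    let p := Nat.gcd m n
    (1 / π) * ∫ x in (-(π/2))..(π/2), ∏ i ∈ Finset.range n, Real.sin (x + m * i * π / n) ^ 2
      = 2 ^ p * (Nat.doubleFactorial (2 * p - 1) : ℝ) / (4 ^ n * Nat.factorial p) := by
  intro p
  have hp : 0 < p := Nat.gcd_pos_of_pos_left n hm
  have hpn : p ∣ n := Nat.gcd_dvd_right m n
  have hpm : p ∣ m := Nat.gcd_dvd_left m n
  set q := n / p with hq_def
  set m' := m / p with hm'_def
  have hnq : n = p * q := (Nat.mul_div_cancel' hpn).symm
  have hmm : m = p * m' := (Nat.mul_div_cancel' hpm).symm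
  have hq : 0 < q := Nat.div_pos (Nat.le_of_dvd hn hpn) hp
  have hco : Nat.Coprime m' q := Nat.coprime_div_gcd_div_gcd hp
  have hmq : m * q = m' * n := by rw [hnq, hmm]; ring
  have hmqR : (m:ℝ) * q = (m':ℝ) * n := by exact_mod_cast congrArg (Nat.cast : ℕ → ℝ) hmq
  have hnR : (n:ℝ) ≠ 0 := Nat.cast_ne_zero.2 hn.ne'
  have hqR : (q:ℝ) ≠ 0 := Nat.cast_ne_zero.2 hq.ne'
  have hint : ∀ x : ℝ, (∏ i ∈ Finset.range n, Real.sin (x + m * i * π / n) ^ 2)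
      = Real.sin ((q:ℝ) * x) ^ (2*p) / 4 ^ (n - p) := by
    intro x
    have hF : ∀ i, (fun i : ℕ => Real.sin (x + m * i * π / n) ^ 2) (i + q)
        = (fun i : ℕ => Real.sin (x + m * i * π / n) ^ 2) i := by
      intro i
      simp only
      have harg : x + (m:ℝ) * (↑(i + q)) * π / n = (x + m * i * π / n) + (m' : ℕ) * π := by
        push_cast
        field_simp
        linear_combination (π * (i:ℝ) * 0 + π) * hmqR
      rw [harg, aux_sin_sq_add_nat_pi]
    calc ∏ i ∈ Finset.range n, Real.sin (x + m * i * π / n) ^ 2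
        = ∏ i ∈ Finset.range (p * q), (fun i : ℕ => Real.sin (x + m * i * π / n) ^ 2) i := by
          rw [← hnq]
      _ = (∏ i ∈ Finset.range q, (fun i : ℕ => Real.sin (x + m * i * π / n) ^ 2) i) ^ p :=
          aux_prod_pow _ q hF p
      _ = (∏ i ∈ Finset.range q,
            (fun k : ℕ => Real.sin (x + (k:ℝ) * π / q) ^ 2) ((m' * i) % q)) ^ p := by
          congr 1
          refine Finset.prod_congr rfl fun i _ => ?_
          simp only
          have h1 : x + (m:ℝ) * i * π / n = x + ((m' * i : ℕ) : ℝ) * π / q := by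
            push_cast
            field_simp
            linear_combination ((i:ℝ) * π) * hmqR
          have hdm : (m' * i : ℕ) = q * (m' * i / q) + (m' * i) % q := (Nat.div_add_mod _ _).symm
          have hdmR : ((m' * i : ℕ) : ℝ)
              = q * ((m' * i / q : ℕ) : ℝ) + ((m' * i % q : ℕ) : ℝ) := by exact_mod_cast hdm
          have h2 : x + ((m' * i : ℕ) : ℝ) * π / q
              = (x + ((m' * i % q : ℕ) : ℝ) * π / q) + ((m' * i / q : ℕ) : ℝ) * π := by
            push_cast at hdmR ⊢
            field_simp
            linear_combination π * hdmR
          rw [h1, h2, aux_sin_sq_add_nat_pi]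
      _ = (∏ j ∈ Finset.range q, (fun k : ℕ => Real.sin (x + (k:ℝ) * π / q) ^ 2) j) ^ p := by
          congr 1
          exact aux_prod_mod (fun k : ℕ => Real.sin (x + (k:ℝ) * π / q) ^ 2) q m' hq hco
      _ = (Real.sin ((q:ℝ) * x) ^ 2 / 4 ^ (q - 1)) ^ p := by
          simp only
          rw [aux_prod_sin_sq q hq x]
      _ = Real.sin ((q:ℝ) * x) ^ (2*p) / 4 ^ (n - p) := by
          rw [div_pow, ← pow_mul, ← pow_mul]
          have hqp : (q - 1) * p = n - p := by
            rw [Nat.sub_mul, one_mul, mul_comm q p, ← hnq]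
          rw [hqp]
  simp only [hint]
  rw [intervalIntegral.integral_div, aux_integral q p hq, aux_df p]
  have hple : p ≤ n := Nat.le_of_dvd hn hpn
  have key : (4:ℝ) ^ n = 4 ^ (n - p) * 2 ^ p * 2 ^ p := by
    rw [show ((4:ℝ) = 2 ^ 2) from by norm_num, ← pow_mul, ← pow_mul, ← pow_add, ← pow_add]
    congr 1
    omega
  have hπ : π ≠ 0 := Real.pi_ne_zero
  have hfac : (p.factorial : ℝ) ≠ 0 := Nat.cast_ne_zero.2 p.factorial_ne_zero
  have h4a : (4:ℝ) ^ (n - p) ≠ 0 := by positivity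
  have h4b : (4:ℝ) ^ n ≠ 0 := by positivity
  have h2a : (2:ℝ) ^ p ≠ 0 := by positivity
  field_simp
  linear_combination key
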